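/- Let q ≥ 1, n ≥ 0, and 1 ≤ k ≤ q. There exist reduced residues a_1, ..., a_n mod q (each coprime to q) and a set P ⊆ Z/qZ with |P| = k such that the number of subsets I ⊆ [n] with (∑_{i∈I} a_i mod q) ∈ P equals ∑_{j : (n-k)/2 ≤ j < (n+k)/2} C(n,j)_q. In fact one may take all a_i = 1 and P to be the k middle residue classes {j mod q : (n-k)/2 ≤ j < (n+k)/2}. -/

import Mathlib

/-- The mod-q binomial coefficient `C(n,s)_q = ∑_{0 ≤ j ≤ n, j ≡ s (mod q)} C(n,j)`. -/
def modBinom (n q : ℕ) (s : ℤ) : ℕ :=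
  ∑ j ∈ Finset.range (n + 1), if ((j : ℤ) - s) % (q : ℤ) = 0 then n.choose j else 0

/-- The sum of the `k` middle mod-`q` binomial coefficients,
`_{(n-k)/2 ≤ j < (n+k)/2} C(n,j)_q` (the integers `j` in question all lie in `[-q, n+q]`
when `k ≤ q`). -/
noncomputable def middleSum (n q k : ℕ) : ℕ :=
  ∑ j ∈ Finset.Icc (-(q : ℤ)) ((n : ℤ) + q),
    if (n : ℤ) - k ≤ 2 * j ∧ 2 * j < (n : ℤ) + k then modBinom n q j else 0

lemma griggs_inj {q : ℕ} (_hq : 0 < q) {L j j' : ℤ} (h1 : L ≤ j) (h2 : j < L + q)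
    (h3 : L ≤ j') (h4 : j' < L + q) (hd : (q : ℤ) ∣ j - j') : j = j' := by
  have habs : |j - j'| < (q : ℤ) := by rw [abs_lt]; omega
  have := Int.eq_zero_of_abs_lt_dvd hd habs
  omega

theorem griggs_main_sharp (q n k : ℕ) [NeZero q] (hk : 1 ≤ k) (hkq : k ≤ q) :
    ∃ (a : Fin n → ZMod q) (P : Finset (ZMod q)),
      (∀ i, IsUnit (a i)) ∧ P.card = k ∧
      ((Finset.univ : Finset (Finset (Fin n))).filter
          (fun I => (∑ i ∈ I, a i) ∈ P)).card = middleSum n q k ∧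
      a = (fun _ => 1) ∧
      P = ((Finset.Icc (-(q : ℤ)) ((n : ℤ) + q)).filter
            (fun j => (n : ℤ) - k ≤ 2 * j ∧ 2 * j < (n : ℤ) + k)).image
            (fun j : ℤ => (j : ZMod q)) := by
  classical
  have hq : 0 < q := Nat.pos_of_ne_zero (NeZero.ne q)
  set L : ℤ := ((n : ℤ) - k + 1) / 2 with hLdef
  have hJ : (Finset.Icc (-(q : ℤ)) ((n : ℤ) + q)).filter
      (fun j => (n : ℤ) - k ≤ 2 * j ∧ 2 * j < (n : ℤ) + k) = Finset.Ico L (L + k) := by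
    ext j
    simp only [Finset.mem_filter, Finset.mem_Icc, Finset.mem_Ico]
    omega
  set P : Finset (ZMod q) := ((Finset.Icc (-(q : ℤ)) ((n : ℤ) + q)).filter
      (fun j => (n : ℤ) - k ≤ 2 * j ∧ 2 * j < (n : ℤ) + k)).image
      (fun j : ℤ => (j : ZMod q)) with hPdef
  have hP : P = (Finset.Ico L (L + k)).image (fun j : ℤ => (j : ZMod q)) := by
    rw [hPdef, hJ]
  -- cast equality to divisibility
  have cast_dvd : ∀ a b : ℤ, ((a : ZMod q) = (b : ZMod q)) ↔ (q : ℤ) ∣ b - a := by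
    intro a b
    rw [ZMod.intCast_eq_intCast_iff]
    exact Int.modEq_iff_dvd
  refine ⟨fun _ => 1, P, fun i => isUnit_one, ?_, ?_, rfl, hPdef⟩
  · -- cardinality
    rw [hP, Finset.card_image_of_injOn]
    · rw [Int.card_Ico]; omega
    · intro j hj j' hj' hcast
      simp only [Finset.coe_Ico, Set.mem_Ico] at hj hj'
      have hd : (q : ℤ) ∣ j' - j := (cast_dvd j j').mp hcast
      exact (griggs_inj hq hj'.1 (by omega) hj.1 (by omega) hd).symm
  · -- the count
    have key : ∀ m : ℕ,
        (∑ j ∈ Finset.Ico L (L + (k:ℤ)), if ((m : ℤ) - j) % (q : ℤ) = 0 then n.choose m else 0)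
        = if ((m : ℤ) : ZMod q) ∈ P then n.choose m else 0 := by
      intro m
      rw [← Finset.sum_filter]
      by_cases hm : ((m : ℤ) : ZMod q) ∈ P
      · obtain ⟨j1, hj1, hcast⟩ := Finset.mem_image.mp (hP ▸ hm)
        rw [Finset.mem_Ico] at hj1
        have hd1 : (q : ℤ) ∣ (m : ℤ) - j1 := (cast_dvd j1 (m:ℤ)).mp hcast
        have hT : (Finset.Ico L (L + (k:ℤ))).filter (fun j => ((m : ℤ) - j) % (q : ℤ) = 0)
            = {j1} := by
          ext j
          simp only [Finset.mem_filter, Finset.mem_singleton, Finset.mem_Ico]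
          constructor
          · rintro ⟨hjIco, hjm⟩
            have hdj : (q : ℤ) ∣ (m : ℤ) - j := Int.dvd_of_emod_eq_zero hjm
            have hdd : (q : ℤ) ∣ j - j1 := by
              have := dvd_sub hd1 hdj
              simpa using this
            exact griggs_inj hq hjIco.1 (by omega) hj1.1 (by omega) hdd
          · rintro rfl
            exact ⟨⟨hj1.1, by omega⟩, Int.emod_eq_zero_of_dvd hd1⟩
        rw [hT, Finset.sum_singleton, if_pos hm]
      · have hT : (Finset.Ico L (L + (k:ℤ))).filter (fun j => ((m : ℤ) - j) % (q : ℤ) = 0)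
            = ∅ := by
          ext j
          simp only [Finset.mem_filter, Finset.notMem_empty, iff_false, not_and]
          intro hjIco hjm
          apply hm
          rw [hP]
          refine Finset.mem_image.mpr ⟨j, hjIco, ?_⟩
          exact (cast_dvd j (m:ℤ)).mpr (Int.dvd_of_emod_eq_zero hjm)
        rw [hT, Finset.sum_empty, if_neg hm]
    -- LHS
    have hsum1 : ∀ I : Finset (Fin n), (∑ _i ∈ I, (1 : ZMod q)) = ((I.card : ℤ) : ZMod q) := by
      intro I; simp
    calc ((Finset.univ : Finset (Finset (Fin n))).filter
          (fun I => (∑ _i ∈ I, (1 : ZMod q)) ∈ P)).card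
        = ∑ I ∈ (Finset.univ : Finset (Finset (Fin n))),
            if ((I.card : ℤ) : ZMod q) ∈ P then 1 else 0 := by
          rw [Finset.card_filter]
          exact Finset.sum_congr rfl fun I _ => by rw [hsum1]
      _ = ∑ m ∈ Finset.range (n + 1), if ((m : ℤ) : ZMod q) ∈ P then n.choose m else 0 := by
          rw [← Finset.powerset_univ, Finset.sum_powerset]
          rw [Finset.card_univ, Fintype.card_fin]
          refine Finset.sum_congr rfl fun m hm => ?_
          have : ∀ I ∈ Finset.powersetCard m (Finset.univ : Finset (Fin n)),
              (if ((I.card : ℤ) : ZMod q) ∈ P then 1 else 0)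
              = (if ((m : ℤ) : ZMod q) ∈ P then 1 else 0) := by
            intro I hI
            rw [(Finset.mem_powersetCard.mp hI).2]
          rw [Finset.sum_congr rfl this, Finset.sum_const, Finset.card_powersetCard,
            Finset.card_univ, Fintype.card_fin, smul_eq_mul]
          split <;> simp
      _ = ∑ m ∈ Finset.range (n + 1), ∑ j ∈ Finset.Ico L (L + (k:ℤ)),
            if ((m : ℤ) - j) % (q : ℤ) = 0 then n.choose m else 0 := by
          exact Finset.sum_congr rfl fun m _ => (key m).symm
      _ = middleSum n q k := by
          rw [Finset.sum_comm, middleSum, ← Finset.sum_filter, hJ]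
          exact Finset.sum_congr rfl fun j _ => rfl
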